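/- Let G be a group, H a subgroup of G, γ ∈ G, and m a positive integer. Suppose η ∈ H is primitive in H and η = b⁻¹ γ^m b for some b ∈ G. Then the orbit of the coset bH under left multiplication by γ on G/H is finite of cardinality exactly m. -/
import Mathlib


/-- If `η ∈ H` is primitive in `H` and `η = b⁻¹ * γ ^ m * b` with `m` a positive integer, then
the orbit of the coset `bH` under left multiplication by `γ` on `G ⧸ H` is finite of
cardinality exactly `m`. -/
theorem stmt4 {G : Type*} [Group G] (H : Subgroup G) (γ b : G) (m : ℕ) (hm : 0 < m)
    (η : G) (hη : η ∈ H)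
    (hprim : ∀ δ ∈ H, ∀ k : ℕ, 0 < k → η = δ ^ k → k = 1)
    (heq : η = b⁻¹ * γ ^ m * b) :
    (MulAction.orbit (Subgroup.zpowers γ) ((b : G ⧸ H))).Finite ∧
    Nat.card (MulAction.orbit (Subgroup.zpowers γ) ((b : G ⧸ H))) = m := by
  -- the subgroup of exponents n with b⁻¹ γ^n b ∈ H
  set S : AddSubgroup ℤ :=
    { carrier := {n : ℤ | b⁻¹ * γ ^ n * b ∈ H}
      zero_mem' := by simp [H.one_mem]
      add_mem' := by
        intro x y hx hy
        have : b⁻¹ * γ ^ (x + y) * b = (b⁻¹ * γ ^ x * b) * (b⁻¹ * γ ^ y * b) := by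
          rw [zpow_add]; group
        simpa [this] using H.mul_mem hx hy
      neg_mem' := by
        intro x hx
        show b⁻¹ * γ ^ (-x) * b ∈ H
        have : b⁻¹ * γ ^ (-x) * b = (b⁻¹ * γ ^ x * b)⁻¹ := by
          rw [zpow_neg]; group
        rw [this]; exact H.inv_mem hx } with hS
  have hmS : (m : ℤ) ∈ S := by
    show b⁻¹ * γ ^ (m : ℤ) * b ∈ H
    rw [zpow_natCast]
    exact heq ▸ hη
  obtain ⟨a, ha⟩ := Int.subgroup_cyclic S
  have hmem : ∀ n : ℤ, n ∈ S ↔ a ∣ n := by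
    intro n
    rw [ha, AddSubgroup.mem_closure_singleton]
    constructor
    · rintro ⟨k, rfl⟩; exact Dvd.intro_left k (by rw [smul_eq_mul])
    · rintro ⟨k, rfl⟩; exact ⟨k, by rw [smul_eq_mul, mul_comm]⟩
  have ham : a ∣ (m : ℤ) := (hmem m).mp hmS
  have ha0 : a ≠ 0 := by
    rintro rfl
    simp only [zero_dvd_iff] at ham
    omega
  set d : ℕ := a.natAbs with hd
  have hdS : (d : ℤ) ∈ S := by
    rcases Int.natAbs_eq a with h | h
    · rw [← h]; exact (hmem a).mpr dvd_rfl
    · have : -(d : ℤ) ∈ S := by rw [← h]; exact (hmem a).mpr dvd_rfl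
      simpa using S.neg_mem this
  have hdm : d ∣ m := Int.natCast_dvd_natCast.mp (by rw [hd, Int.natAbs_dvd]; exact ham)
  have hd0 : 0 < d := Int.natAbs_pos.mpr ha0
  -- primitivity forces d = m
  have hdm' : d = m := by
    have hδ : b⁻¹ * γ ^ (d : ℤ) * b ∈ H := hdS
    rw [zpow_natCast] at hδ
    have hpow : (b⁻¹ * γ ^ d * b) ^ (m / d) = b⁻¹ * γ ^ m * b := by
      have : b⁻¹ * γ ^ d * b = b⁻¹ * γ ^ d * b⁻¹⁻¹ := by rw [inv_inv]
      rw [this, conj_pow, ← pow_mul, Nat.mul_div_cancel' hdm, inv_inv]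
    have h1 : m / d = 1 :=
      hprim _ hδ (m / d) (Nat.div_pos (Nat.le_of_dvd hm hdm) hd0) (by rw [hpow, heq])
    have h2 := Nat.div_mul_cancel hdm
    rw [h1, one_mul] at h2
    exact h2
  have haeq : a = (m : ℤ) ∨ a = -(m : ℤ) := by
    rcases Int.natAbs_eq a with h | h
    · left; rw [h, ← hd, hdm']
    · right; rw [h, ← hd, hdm']
  have hkey : ∀ n : ℤ, n ∈ S ↔ (m : ℤ) ∣ n := by
    intro n
    rw [hmem n]
    rcases haeq with h | h <;> rw [h] <;> simp [neg_dvd]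
  -- coset equality criterion
  have hcos : ∀ n n' : ℤ, ((γ ^ n * b : G) : G ⧸ H) = ((γ ^ n' * b : G) : G ⧸ H) ↔
      (m : ℤ) ∣ (n' - n) := by
    intro n n'
    rw [QuotientGroup.eq, ← hkey]
    constructor
    · intro h
      have : (γ ^ n * b)⁻¹ * (γ ^ n' * b) = b⁻¹ * γ ^ (n' - n) * b := by
        rw [zpow_sub]; group
      rwa [this] at h
    · intro h
      have h' : b⁻¹ * γ ^ (n' - n) * b ∈ H := h
      have : (γ ^ n * b)⁻¹ * (γ ^ n' * b) = b⁻¹ * γ ^ (n' - n) * b := by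
        rw [zpow_sub]; group
      rwa [this]
  -- the orbit equals the range of a map from Fin m
  set g : Fin m → G ⧸ H := fun j => ((γ ^ (j : ℕ) * b : G) : G ⧸ H) with hg
  have horb : MulAction.orbit (Subgroup.zpowers γ) ((b : G ⧸ H)) = Set.range g := by
    ext x
    constructor
    · rintro ⟨⟨c, hc⟩, rfl⟩
      obtain ⟨n, rfl⟩ := Subgroup.mem_zpowers_iff.mp hc
      refine ⟨⟨(n % m).toNat, ?_⟩, ?_⟩
      · have h1 : 0 ≤ n % m := Int.emod_nonneg n (by exact_mod_cast hm.ne')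
        have h2 : n % m < m := Int.emod_lt_of_pos n (by exact_mod_cast hm)
        omega
      · show ((γ ^ ((n % m).toNat) * b : G) : G ⧸ H) = ((γ ^ n * b : G) : G ⧸ H)
        rw [← zpow_natCast γ ((n % m).toNat),
          Int.toNat_of_nonneg (Int.emod_nonneg n (by exact_mod_cast hm.ne')), hcos]
        exact Int.dvd_self_sub_of_emod_eq rfl
    · rintro ⟨j, rfl⟩
      exact ⟨⟨γ ^ (j : ℕ), Subgroup.mem_zpowers_iff.mpr ⟨(j : ℕ), zpow_natCast γ _⟩⟩, rfl⟩
  have hginj : Function.Injective g := by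
    intro j j' h
    have h' := (hcos ((j : ℕ) : ℤ) ((j' : ℕ) : ℤ)).mp (by rw [zpow_natCast, zpow_natCast]; exact h)
    have hj := j.isLt
    have hj' := j'.isLt
    have h0 : ((j' : ℕ) : ℤ) - ((j : ℕ) : ℤ) = 0 :=
      Int.eq_zero_of_abs_lt_dvd h' (by rw [abs_lt]; omega)
    exact Fin.ext (by omega)
  constructor
  · rw [horb]; exact Set.finite_range g
  · rw [horb, Nat.card_range_of_injective hginj, Nat.card_eq_fintype_card, Fintype.card_fin]
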